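/- Let ξ ∈ C¹(Q̄)^{d+1} with tr_{Q₀}ξ = 0 and tr_Σ⁻ξ = 0, where Q = Ω × (0,τ). Then ∫_Q ξᵀ (τ T ξ) ≥ 0, and consequently ‖ξ‖²_{L²(Q)^{d+1}} ≤ ∫_Q ξᵀ(ξ + τTξ) ≤ ‖ξ‖_{L²(Q)^{d+1}} ‖ξ + τTξ‖_{L²(Q)^{d+1}}, so that ‖ξ‖_{L²(Q)^{d+1}} ≤ ‖ξ + τTξ‖_{L²(Q)^{d+1}}. -/

import Mathlib

open MeasureTheory RealInnerProductSpace

variable {d : ℕ}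

/-- Time derivative of a vector-valued space–time field. -/
noncomputable def dtVec (ξ₁ : ℝ × EuclideanSpace ℝ (Fin d) → EuclideanSpace ℝ (Fin d))
    (p : ℝ × EuclideanSpace ℝ (Fin d)) : EuclideanSpace ℝ (Fin d) :=
  fderiv ℝ ξ₁ p (1, 0)

/-- Time derivative of a scalar space–time field. -/
noncomputable def dtScal (ξ₂ : ℝ × EuclideanSpace ℝ (Fin d) → ℝ)
    (p : ℝ × EuclideanSpace ℝ (Fin d)) : ℝ :=
  fderiv ℝ ξ₂ p (1, 0)

/-- Spatial gradient of a scalar space–time field. -/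
noncomputable def gradx (ξ₂ : ℝ × EuclideanSpace ℝ (Fin d) → ℝ)
    (p : ℝ × EuclideanSpace ℝ (Fin d)) : EuclideanSpace ℝ (Fin d) :=
  gradient (fun x => ξ₂ (p.1, x)) p.2

/-- Spatial divergence of a vector-valued space–time field. -/
noncomputable def divx (ξ₁ : ℝ × EuclideanSpace ℝ (Fin d) → EuclideanSpace ℝ (Fin d))
    (p : ℝ × EuclideanSpace ℝ (Fin d)) : ℝ :=
  ∑ i, fderiv ℝ (fun x => ξ₁ (p.1, x) i) p.2 (EuclideanSpace.single i 1)

private lemma cs_point {n : ℕ} (u v : EuclideanSpace ℝ (Fin n)) (x y : ℝ) :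
    ⟪u, v⟫ + x * y ≤ Real.sqrt (‖u‖ ^ 2 + x ^ 2) * Real.sqrt (‖v‖ ^ 2 + y ^ 2) := by
  have h1 := real_inner_le_norm u v
  have h2 : x * y ≤ |x| * |y| := by rw [← abs_mul]; exact le_abs_self _
  have hA : (0:ℝ) ≤ ‖u‖ ^ 2 + x ^ 2 := by positivity
  have hB : (0:ℝ) ≤ ‖v‖ ^ 2 + y ^ 2 := by positivity
  have h0 : ⟪u, v⟫ + x * y ≤ ‖u‖ * ‖v‖ + |x| * |y| := by linarith
  refine h0.trans ?_
  rw [← Real.sqrt_mul hA]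
  refine (Real.le_sqrt (by positivity) (by positivity)).mpr ?_
  nlinarith [sq_nonneg (‖u‖ * |y| - ‖v‖ * |x|), sq_abs x, sq_abs y, norm_nonneg u,
    norm_nonneg v, abs_nonneg x, abs_nonneg y]

private lemma integral_cs {α : Type*} [MeasurableSpace α] (μ : Measure α)
    (g h : α → ℝ)
    (hg2 : Integrable (fun p => g p ^ 2) μ) (hh2 : Integrable (fun p => h p ^ 2) μ)
    (hgh : Integrable (fun p => g p * h p) μ) :
    ∫ p, g p * h p ∂μ ≤
      Real.sqrt (∫ p, g p ^ 2 ∂μ) * Real.sqrt (∫ p, h p ^ 2 ∂μ) := by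
  set A := ∫ p, g p ^ 2 ∂μ with hAdef
  set B := ∫ p, h p ^ 2 ∂μ with hBdef
  set C := ∫ p, g p * h p ∂μ with hCdef
  have hA : 0 ≤ A := integral_nonneg fun p => sq_nonneg _
  have hB : 0 ≤ B := integral_nonneg fun p => sq_nonneg _
  rcases le_or_gt C 0 with hC | hC
  · exact hC.trans (by positivity)
  have key : ∀ t : ℝ, 0 ≤ t ^ 2 * A + 2 * t * C + B := by
    intro t
    have h2 : 0 ≤ ∫ p, (t * g p + h p) ^ 2 ∂μ := integral_nonneg fun p => sq_nonneg _
    have h1 : (fun p => (t * g p + h p) ^ 2) =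
        fun p => (t ^ 2 * g p ^ 2 + 2 * t * (g p * h p)) + h p ^ 2 := by
      funext p; ring
    have hX : Integrable (fun p => t ^ 2 * g p ^ 2 + 2 * t * (g p * h p)) μ :=
      (hg2.const_mul _).add (hgh.const_mul _)
    have hY : Integrable (fun p => t ^ 2 * g p ^ 2) μ := hg2.const_mul _
    have hZ : Integrable (fun p => 2 * t * (g p * h p)) μ := hgh.const_mul _
    rw [h1, integral_add hX hh2, integral_add hY hZ,
      integral_const_mul, integral_const_mul] at h2
    linarith
  have hCsq : C ^ 2 ≤ A * B := by
    rcases eq_or_lt_of_le hA with hA0 | hA0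
    · exfalso
      have hk := key (-(B + 1) / (2 * C))
      rw [← hA0] at hk
      have h2C : (0:ℝ) < 2 * C := by linarith
      have : 2 * (-(B + 1) / (2 * C)) * C = -(B + 1) := by field_simp
      nlinarith
    · have hk := key (-(C / A))
      have he : (-(C / A)) ^ 2 * A + 2 * (-(C / A)) * C + B = B - C ^ 2 / A := by
        field_simp; ring
      rw [he] at hk
      have hdiv2 : C ^ 2 / A ≤ B := by linarith
      calc C ^ 2 = C ^ 2 / A * A := by field_simp
        _ ≤ B * A := by nlinarith
        _ = A * B := mul_comm _ _
  calc C ≤ Real.sqrt (A * B) :=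
        (Real.le_sqrt hC.le (by positivity)).mpr hCsq
    _ = Real.sqrt A * Real.sqrt B := Real.sqrt_mul hA B


variable {d : ℕ}


private lemma div_identity (c₀ : ℝ)
    (ξ₁ : ℝ × EuclideanSpace ℝ (Fin d) → EuclideanSpace ℝ (Fin d)) (hξ₁ : ContDiff ℝ 1 ξ₁)
    (ξ₂ : ℝ × EuclideanSpace ℝ (Fin d) → ℝ) (hξ₂ : ContDiff ℝ 1 ξ₂)
    (p : ℝ × EuclideanSpace ℝ (Fin d)) :
    dtScal (fun q => (⟪ξ₁ q, ξ₁ q⟫ + ξ₂ q * ξ₂ q) / 2) p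
      + divx (fun q => (c₀ * ξ₂ q) • ξ₁ q) p =
    ⟪ξ₁ p, dtVec ξ₁ p + c₀ • gradx ξ₂ p⟫ +
          ξ₂ p * (dtScal ξ₂ p + c₀ * divx ξ₁ p) := by
  have hdξ₁ : HasFDerivAt ξ₁ (fderiv ℝ ξ₁ p) p := (hξ₁.differentiable one_ne_zero p).hasFDerivAt
  have hdξ₂ : HasFDerivAt ξ₂ (fderiv ℝ ξ₂ p) p := (hξ₂.differentiable one_ne_zero p).hasFDerivAt
  -- time part
  have h1 : dtScal (fun q => (⟪ξ₁ q, ξ₁ q⟫ + ξ₂ q * ξ₂ q) / 2) p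
      = ⟪ξ₁ p, dtVec ξ₁ p⟫ + ξ₂ p * dtScal ξ₂ p := by
    have hi := hdξ₁.inner ℝ hdξ₁
    have hm := hdξ₂.mul hdξ₂
    have hD := ((hi.add hm).mul_const (2⁻¹ : ℝ)).fderiv
    unfold dtScal dtVec
    simp only [div_eq_mul_inv]
    simp only [Pi.add_apply, Pi.mul_apply] at hD
    rw [hD]
    simp [fderivInnerCLM_apply, real_inner_comm]
    have hXY : ∑ x, (fderiv ℝ ξ₁ p) (1, 0) x * ξ₁ p x
        = ∑ x, ξ₁ p x * (fderiv ℝ ξ₁ p) (1, 0) x :=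
      Finset.sum_congr rfl fun i _ => mul_comm _ _
    ring
  -- space part
  set Dj : EuclideanSpace ℝ (Fin d) →L[ℝ] ℝ × EuclideanSpace ℝ (Fin d) :=
    (0 : EuclideanSpace ℝ (Fin d) →L[ℝ] ℝ).prod (ContinuousLinearMap.id ℝ _) with hDj
  have hdj : ∀ x : EuclideanSpace ℝ (Fin d),
      HasFDerivAt (fun x => (p.1, x)) Dj x := fun x =>
    HasFDerivAt.prodMk (hasFDerivAt_const p.1 x) (hasFDerivAt_id x)
  have hdξ₁' : HasFDerivAt ξ₁ (fderiv ℝ ξ₁ p) (p.1, p.2) := by simpa using hdξ₁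
  have hdξ₂' : HasFDerivAt ξ₂ (fderiv ℝ ξ₂ p) (p.1, p.2) := by simpa using hdξ₂
  have hφ : HasFDerivAt (fun x => ξ₂ (p.1, x)) ((fderiv ℝ ξ₂ p).comp Dj) p.2 :=
    hdξ₂'.comp p.2 (hdj p.2)
  have hΨ : HasFDerivAt (fun x => ξ₁ (p.1, x)) ((fderiv ℝ ξ₁ p).comp Dj) p.2 :=
    hdξ₁'.comp p.2 (hdj p.2)
  have hψ : ∀ i, HasFDerivAt (fun x => ξ₁ (p.1, x) i)
      ((EuclideanSpace.proj i).comp ((fderiv ℝ ξ₁ p).comp Dj)) p.2 := fun i =>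
    ((EuclideanSpace.proj (𝕜 := ℝ) i).hasFDerivAt.comp p.2 hΨ : _)
  have hrepr : ∀ v : EuclideanSpace ℝ (Fin d),
      ∑ i, v i • EuclideanSpace.single i (1:ℝ) = v := by
    intro v
    have := (EuclideanSpace.basisFun (Fin d) ℝ).sum_repr v
    simpa [EuclideanSpace.basisFun_apply, EuclideanSpace.basisFun_repr] using this
  -- gradient identity
  have hgrad : ⟪ξ₁ p, gradx ξ₂ p⟫ = ((fderiv ℝ ξ₂ p).comp Dj) (ξ₁ p) := by
    rw [real_inner_comm]
    unfold gradx gradient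
    rw [hφ.fderiv]
    exact InnerProductSpace.toDual_symm_apply
  have hgrad2 : ⟪ξ₁ p, gradx ξ₂ p⟫
      = ∑ i, ξ₁ p i * ((fderiv ℝ ξ₂ p).comp Dj) (EuclideanSpace.single i 1) := by
    rw [hgrad]
    conv_lhs => rw [← hrepr (ξ₁ p)]
    rw [map_sum]
    simp [smul_eq_mul]
  -- divx of ξ₁
  have hdivx : divx ξ₁ p
      = ∑ i, ((EuclideanSpace.proj i).comp ((fderiv ℝ ξ₁ p).comp Dj))
          (EuclideanSpace.single i 1) := by
    unfold divx
    refine Finset.sum_congr rfl fun i _ => ?_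
    rw [(hψ i).fderiv]
  -- F coordinates
  have hF : ∀ i, HasFDerivAt (fun x => ((c₀ * ξ₂ (p.1, x)) • ξ₁ (p.1, x)) i)
      ((c₀ * ξ₂ p) • ((EuclideanSpace.proj i).comp ((fderiv ℝ ξ₁ p).comp Dj))
        + ξ₁ p i • (c₀ • ((fderiv ℝ ξ₂ p).comp Dj))) p.2 := by
    intro i
    have := (hφ.const_mul c₀).mul (hψ i)
    simpa [Pi.mul_def, mul_comm, mul_left_comm, mul_assoc] using this
  have hval : ∀ i, fderiv ℝ (fun x => ((c₀ * ξ₂ (p.1, x)) • ξ₁ (p.1, x)) i) p.2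
      (EuclideanSpace.single i 1)
      = (c₀ * ξ₂ p) * (((EuclideanSpace.proj i).comp ((fderiv ℝ ξ₁ p).comp Dj))
          (EuclideanSpace.single i 1))
        + ξ₁ p i * (c₀ * (((fderiv ℝ ξ₂ p).comp Dj) (EuclideanSpace.single i 1))) := by
    intro i
    rw [(hF i).fderiv]
    simp [smul_eq_mul]
  have h2 : divx (fun q => (c₀ * ξ₂ q) • ξ₁ q) p
      = c₀ * ⟪ξ₁ p, gradx ξ₂ p⟫ + ξ₂ p * (c₀ * divx ξ₁ p) := by
    have hL : divx (fun q => (c₀ * ξ₂ q) • ξ₁ q) p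
        = ∑ i, fderiv ℝ (fun x => ((c₀ * ξ₂ (p.1, x)) • ξ₁ (p.1, x)) i) p.2
            (EuclideanSpace.single i 1) := rfl
    rw [hL]
    simp only [hval]
    rw [Finset.sum_add_distrib, ← Finset.mul_sum]
    have e2 : ∑ i, ξ₁ p i * (c₀ * ((fderiv ℝ ξ₂ p).comp Dj) (EuclideanSpace.single i 1))
        = c₀ * ∑ i, ξ₁ p i * ((fderiv ℝ ξ₂ p).comp Dj) (EuclideanSpace.single i 1) := by
      rw [Finset.mul_sum]
      exact Finset.sum_congr rfl fun i _ => by ring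
    rw [e2, ← hgrad2, ← hdivx]
    ring
  rw [h1, h2, inner_add_right, real_inner_smul_right]
  ring

/-- Estimate (5.63)–(5.65): if `ξ` vanishes at `t = 0` and has vanishing inflow trace
`tr⁻ξ = √(c₀/2)(ξ₂ − n·ξ₁) = 0` on `Σ`, then `∫_Q ξᵀ(τTξ) ≥ 0`, whence
`‖ξ‖² ≤ ∫_Q ξᵀ(ξ + τTξ) ≤ ‖ξ‖ ‖ξ + τTξ‖` and `‖ξ‖_{L²(Q)} ≤ ‖ξ + τTξ‖_{L²(Q)}`. -/
theorem acoustic_dissipativity_estimate (Ω : Set (EuclideanSpace ℝ (Fin d)))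
    (hΩo : IsOpen Ω) (hΩb : Bornology.IsBounded Ω)
    (σ : Measure (EuclideanSpace ℝ (Fin d)))
    (nv : EuclideanSpace ℝ (Fin d) → EuclideanSpace ℝ (Fin d))
    (τ c₀ : ℝ) (hτ : 0 < τ) (hc₀ : 0 < c₀)
    (hdiv : ∀ (f : ℝ × EuclideanSpace ℝ (Fin d) → ℝ)
        (F : ℝ × EuclideanSpace ℝ (Fin d) → EuclideanSpace ℝ (Fin d)),
      ContDiff ℝ 1 f → ContDiff ℝ 1 F →
      ∫ p in Set.Ioo 0 τ ×ˢ Ω, (dtScal f p + divx F p) =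
        (∫ x in Ω, f (τ, x)) - (∫ x in Ω, f (0, x)) +
          ∫ t in Set.Ioo 0 τ, ∫ x, ⟪nv x, F (t, x)⟫ ∂σ)
    (ξ₁ : ℝ × EuclideanSpace ℝ (Fin d) → EuclideanSpace ℝ (Fin d)) (hξ₁ : ContDiff ℝ 1 ξ₁)
    (ξ₂ : ℝ × EuclideanSpace ℝ (Fin d) → ℝ) (hξ₂ : ContDiff ℝ 1 ξ₂)
    (hQ0 : ∀ x ∈ Ω, ξ₁ (0, x) = 0 ∧ ξ₂ (0, x) = 0)
    (htrSigma : ∀ t ∈ Set.Ioo (0 : ℝ) τ, ∀ᵐ x ∂σ,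
      Real.sqrt (c₀ / 2) * (ξ₂ (t, x) - ⟪nv x, ξ₁ (t, x)⟫) = 0)
    (hint1 : IntegrableOn (fun p => ‖ξ₁ p‖ ^ 2 + (ξ₂ p) ^ 2) (Set.Ioo 0 τ ×ˢ Ω) volume)
    (hint2 : IntegrableOn (fun p =>
      ⟪ξ₁ p, dtVec ξ₁ p + c₀ • gradx ξ₂ p⟫ +
        ξ₂ p * (dtScal ξ₂ p + c₀ * divx ξ₁ p)) (Set.Ioo 0 τ ×ˢ Ω) volume)
    (hint3 : IntegrableOn (fun p =>
      ‖ξ₁ p + τ • (dtVec ξ₁ p + c₀ • gradx ξ₂ p)‖ ^ 2 +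
        (ξ₂ p + τ * (dtScal ξ₂ p + c₀ * divx ξ₁ p)) ^ 2) (Set.Ioo 0 τ ×ˢ Ω) volume) :
    0 ≤ τ * ∫ p in Set.Ioo 0 τ ×ˢ Ω,
        (⟪ξ₁ p, dtVec ξ₁ p + c₀ • gradx ξ₂ p⟫ +
          ξ₂ p * (dtScal ξ₂ p + c₀ * divx ξ₁ p)) ∧
    (∫ p in Set.Ioo 0 τ ×ˢ Ω, (‖ξ₁ p‖ ^ 2 + (ξ₂ p) ^ 2)) ≤
      ∫ p in Set.Ioo 0 τ ×ˢ Ω, ((‖ξ₁ p‖ ^ 2 + (ξ₂ p) ^ 2) +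
        τ * (⟪ξ₁ p, dtVec ξ₁ p + c₀ • gradx ξ₂ p⟫ +
          ξ₂ p * (dtScal ξ₂ p + c₀ * divx ξ₁ p))) ∧
    (∫ p in Set.Ioo 0 τ ×ˢ Ω, ((‖ξ₁ p‖ ^ 2 + (ξ₂ p) ^ 2) +
        τ * (⟪ξ₁ p, dtVec ξ₁ p + c₀ • gradx ξ₂ p⟫ +
          ξ₂ p * (dtScal ξ₂ p + c₀ * divx ξ₁ p)))) ≤
      Real.sqrt (∫ p in Set.Ioo 0 τ ×ˢ Ω, (‖ξ₁ p‖ ^ 2 + (ξ₂ p) ^ 2)) *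
        Real.sqrt (∫ p in Set.Ioo 0 τ ×ˢ Ω,
          (‖ξ₁ p + τ • (dtVec ξ₁ p + c₀ • gradx ξ₂ p)‖ ^ 2 +
            (ξ₂ p + τ * (dtScal ξ₂ p + c₀ * divx ξ₁ p)) ^ 2)) ∧
    Real.sqrt (∫ p in Set.Ioo 0 τ ×ˢ Ω, (‖ξ₁ p‖ ^ 2 + (ξ₂ p) ^ 2)) ≤
      Real.sqrt (∫ p in Set.Ioo 0 τ ×ˢ Ω,
        (‖ξ₁ p + τ • (dtVec ξ₁ p + c₀ • gradx ξ₂ p)‖ ^ 2 +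
          (ξ₂ p + τ * (dtScal ξ₂ p + c₀ * divx ξ₁ p)) ^ 2)) := by
  classical
  set Q : Set (ℝ × EuclideanSpace ℝ (Fin d)) := Set.Ioo 0 τ ×ˢ Ω with hQdef
  -- the integrands
  set a : ℝ × EuclideanSpace ℝ (Fin d) → ℝ := fun p => ‖ξ₁ p‖ ^ 2 + (ξ₂ p) ^ 2 with hadef
  set e : ℝ × EuclideanSpace ℝ (Fin d) → ℝ := fun p =>
    ⟪ξ₁ p, dtVec ξ₁ p + c₀ • gradx ξ₂ p⟫ + ξ₂ p * (dtScal ξ₂ p + c₀ * divx ξ₁ p) with hedef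
  set c : ℝ × EuclideanSpace ℝ (Fin d) → ℝ := fun p =>
    ‖ξ₁ p + τ • (dtVec ξ₁ p + c₀ • gradx ξ₂ p)‖ ^ 2 +
      (ξ₂ p + τ * (dtScal ξ₂ p + c₀ * divx ξ₁ p)) ^ 2 with hcdef
  -- Step 1 : 0 ≤ ∫_Q e
  have hIe : 0 ≤ ∫ p in Q, e p := by
    have hf : ContDiff ℝ 1 (fun q => (⟪ξ₁ q, ξ₁ q⟫ + ξ₂ q * ξ₂ q) / 2) :=
      ((hξ₁.inner ℝ hξ₁).add (hξ₂.mul hξ₂)).div_const 2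
    have hF : ContDiff ℝ 1 (fun q => (c₀ * ξ₂ q) • ξ₁ q) :=
      (contDiff_const.mul hξ₂).smul hξ₁
    have hde := hdiv _ _ hf hF
    have hcongr : ∫ p in Q, (dtScal (fun q => (⟪ξ₁ q, ξ₁ q⟫ + ξ₂ q * ξ₂ q) / 2) p
        + divx (fun q => (c₀ * ξ₂ q) • ξ₁ q) p) = ∫ p in Q, e p := by
      refine integral_congr_ae (Filter.Eventually.of_forall fun p => ?_)
      exact div_identity c₀ ξ₁ hξ₁ ξ₂ hξ₂ p
    rw [hcongr] at hde
    rw [hde]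
    beta_reduce
    have hI0 : ∫ x in Ω, (⟪ξ₁ (0, x), ξ₁ (0, x)⟫ + ξ₂ (0, x) * ξ₂ (0, x)) / 2 = 0 := by
      rw [setIntegral_congr_fun hΩo.measurableSet
        (g := fun _ => (0:ℝ)) fun x hx => by simp [(hQ0 x hx).1, (hQ0 x hx).2]]
      simp
    have hIτ : 0 ≤ ∫ x in Ω, (⟪ξ₁ (τ, x), ξ₁ (τ, x)⟫ + ξ₂ (τ, x) * ξ₂ (τ, x)) / 2 := by
      refine setIntegral_nonneg hΩo.measurableSet fun x _ => ?_
      have := real_inner_self_nonneg (x := ξ₁ (τ, x))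
      nlinarith [mul_self_nonneg (ξ₂ (τ, x))]
    have hIb : 0 ≤ ∫ t in Set.Ioo (0:ℝ) τ, ∫ x, ⟪nv x, (c₀ * ξ₂ (t, x)) • ξ₁ (t, x)⟫ ∂σ := by
      refine setIntegral_nonneg measurableSet_Ioo fun t ht => ?_
      refine integral_nonneg_of_ae ?_
      filter_upwards [htrSigma t ht] with x hx
      have hs : Real.sqrt (c₀ / 2) ≠ 0 :=
        ne_of_gt (Real.sqrt_pos.mpr (by linarith))
      have hx2 : ξ₂ (t, x) = ⟪nv x, ξ₁ (t, x)⟫ := by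
        rcases mul_eq_zero.mp hx with h | h
        · exact absurd h hs
        · linarith
      simp only [Pi.zero_apply]
      rw [real_inner_smul_right, hx2]
      nlinarith [mul_self_nonneg (⟪nv x, ξ₁ (t, x)⟫ : ℝ), hc₀.le]
    linarith
  -- integrabilities
  have hint2' : IntegrableOn (fun p => τ * e p) Q volume := hint2.const_mul τ
  have hIae : ∫ p in Q, (a p + τ * e p) = (∫ p in Q, a p) + τ * ∫ p in Q, e p := by
    rw [integral_add hint1 hint2', integral_const_mul]
  -- conjunct 2
  have hQm : MeasurableSet Q := measurableSet_Ioo.prod hΩo.measurableSet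
  have hA : 0 ≤ ∫ p in Q, a p :=
    setIntegral_nonneg hQm fun p _ => by simp only [hadef]; positivity
  have hC : 0 ≤ ∫ p in Q, c p :=
    setIntegral_nonneg hQm fun p _ => by simp only [hcdef]; positivity
  -- conjunct 3 : Cauchy–Schwarz
  set g : ℝ × EuclideanSpace ℝ (Fin d) → ℝ := fun p => Real.sqrt (a p) with hgdef
  set h : ℝ × EuclideanSpace ℝ (Fin d) → ℝ := fun p => Real.sqrt (c p) with hhdef
  have hg2 : ∀ p, g p ^ 2 = a p := fun p =>
    Real.sq_sqrt (by simp only [hadef]; positivity)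
  have hh2 : ∀ p, h p ^ 2 = c p := fun p =>
    Real.sq_sqrt (by simp only [hcdef]; positivity)
  have hg2i : Integrable (fun p => g p ^ 2) (volume.restrict Q) := by
    simp only [hg2]; exact hint1
  have hh2i : Integrable (fun p => h p ^ 2) (volume.restrict Q) := by
    simp only [hh2]; exact hint3
  have hgm : AEStronglyMeasurable g (volume.restrict Q) :=
    Real.continuous_sqrt.comp_aestronglyMeasurable hint1.aestronglyMeasurable
  have hhm : AEStronglyMeasurable h (volume.restrict Q) :=
    Real.continuous_sqrt.comp_aestronglyMeasurable hint3.aestronglyMeasurable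
  have hghi : Integrable (fun p => g p * h p) (volume.restrict Q) := by
    have hbd : Integrable (fun p => 1/2 * (a p + c p)) (volume.restrict Q) :=
      (hint1.add hint3).const_mul (1/2)
    refine Integrable.mono' hbd (hgm.mul hhm) ?_
    refine Filter.Eventually.of_forall fun p => ?_
    have h1 : 0 ≤ g p := Real.sqrt_nonneg _
    have h2 : 0 ≤ h p := Real.sqrt_nonneg _
    rw [Real.norm_eq_abs, abs_of_nonneg (mul_nonneg h1 h2)]
    have key : g p * h p ≤ 1 / 2 * (g p ^ 2 + h p ^ 2) := by
      nlinarith [sq_nonneg (g p - h p)]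
    rw [hg2 p, hh2 p] at key
    linarith
  have hptCS : ∀ p, a p + τ * e p ≤ g p * h p := by
    intro p
    have hpt : a p + τ * e p =
        ⟪ξ₁ p, ξ₁ p + τ • (dtVec ξ₁ p + c₀ • gradx ξ₂ p)⟫ +
          ξ₂ p * (ξ₂ p + τ * (dtScal ξ₂ p + c₀ * divx ξ₁ p)) := by
      rw [inner_add_right, real_inner_smul_right, real_inner_self_eq_norm_sq]
      simp only [hadef, hedef]
      ring
    rw [hpt, hgdef, hhdef, hadef, hcdef]
    exact cs_point _ _ _ _
  have hCS : ∫ p in Q, (a p + τ * e p) ≤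
      Real.sqrt (∫ p in Q, a p) * Real.sqrt (∫ p in Q, c p) := by
    have step1 : ∫ p in Q, (a p + τ * e p) ≤ ∫ p in Q, g p * h p :=
      integral_mono (hint1.add hint2') hghi hptCS
    have step2 := integral_cs (volume.restrict Q) g h hg2i hh2i hghi
    have e1 : ∫ p in Q, g p ^ 2 = ∫ p in Q, a p := by simp only [hg2]
    have e2 : ∫ p in Q, h p ^ 2 = ∫ p in Q, c p := by simp only [hh2]
    rw [e1, e2] at step2
    exact step1.trans step2
  -- conjunct 4
  have hfin : Real.sqrt (∫ p in Q, a p) ≤ Real.sqrt (∫ p in Q, c p) := by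
    have chain : (∫ p in Q, a p) ≤
        Real.sqrt (∫ p in Q, a p) * Real.sqrt (∫ p in Q, c p) := by
      have := mul_nonneg hτ.le hIe
      calc (∫ p in Q, a p) ≤ ∫ p in Q, (a p + τ * e p) := by rw [hIae]; linarith
        _ ≤ _ := hCS
    rcases eq_or_lt_of_le (Real.sqrt_nonneg (∫ p in Q, a p)) with h0 | h0
    · rw [← h0]; exact Real.sqrt_nonneg _
    · have : Real.sqrt (∫ p in Q, a p) * Real.sqrt (∫ p in Q, a p) ≤
          Real.sqrt (∫ p in Q, a p) * Real.sqrt (∫ p in Q, c p) := by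
        rw [Real.mul_self_sqrt hA]; exact chain
      exact le_of_mul_le_mul_left this h0
  refine ⟨mul_nonneg hτ.le hIe, ?_, hCS, hfin⟩
  rw [hIae]
  have := mul_nonneg hτ.le hIe
  linarith
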